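/- Let Q_{XY} be a fully supported probability distribution on a finite product X × Y, c ≥ 1, and let P_{U|X} be a minimizer of c·H(Y|U) + I(U;X) over stochastic kernels from X to a finite set U, where (U,X,Y) ∼ P_{U|X}·Q_{XY} and U − X − Y form a Markov chain. Then the conditional expectation E[c·ln(1/Q_{Y|U}(Y|U)) + ln(Q_{X|U}(X|U)/Q_X(X)) | U, X] does not depend on U (almost surely): it is a function of X alone. -/

import Mathlib

open Finset
open scoped Classical

variable {X Y U : Type*} [Fintype X] [Fintype Y] [Fintype U]

/-- Marginal `Q_X` of a joint distribution `Q` on `X × Y`. -/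
noncomputable def margX (Q : X → Y → ℝ) (x : X) : ℝ := ∑ y, Q x y

/-- Marginal `P_U` of `U` under the joint law `P_{U|X} · Q_{XY}`. -/
noncomputable def margU (Q : X → Y → ℝ) (P : X → U → ℝ) (u : U) : ℝ :=
  ∑ x, margX Q x * P x u

/-- Conditional law `Q_{Y|U}(y|u)` under the joint law `P_{U|X} · Q_{XY}` (Markov chain
`U - X - Y`). -/
noncomputable def condYU (Q : X → Y → ℝ) (P : X → U → ℝ) (u : U) (y : Y) : ℝ :=
  (∑ x, Q x y * P x u) / margU Q P u

/-- Conditional law `Q_{X|U}(x|u)` under the joint law `P_{U|X} · Q_{XY}`. -/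
noncomputable def condXU (Q : X → Y → ℝ) (P : X → U → ℝ) (u : U) (x : X) : ℝ :=
  margX Q x * P x u / margU Q P u

/-- Conditional Shannon entropy `H(Y|U)` (natural log) under `P_{U|X} · Q_{XY}`. -/
noncomputable def condEntYU (Q : X → Y → ℝ) (P : X → U → ℝ) : ℝ :=
  -∑ u, ∑ y, (∑ x, Q x y * P x u) * Real.log (condYU Q P u y)

/-- Mutual information `I(U;X)` (natural log) under `P_{U|X} · Q_X`. -/
noncomputable def mutInfUX (Q : X → Y → ℝ) (P : X → U → ℝ) : ℝ :=
  ∑ u, ∑ x, margX Q x * P x u * Real.log (P x u / margU Q P u)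

/-- The WAK objective `c·H(Y|U) + I(U;X)`. -/
noncomputable def wakObj (c : ℝ) (Q : X → Y → ℝ) (P : X → U → ℝ) : ℝ :=
  c * condEntYU Q P + mutInfUX Q P

/- ### Auxiliary material for the proof -/

/-- Signed indicator used to perturb a kernel: `+1` at `u`, `-1` at `u'`. -/
noncomputable def sg (u u' v : U) : ℝ := (if v = u then 1 else 0) - (if v = u' then 1 else 0)

/-- The perturbed kernel: move mass `ε` at `x₀` from `u'` to `u`. -/
noncomputable def pert (P : X → U → ℝ) (x₀ : X) (u u' : U) (ε : ℝ) (x : X) (v : U) : ℝ :=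
  P x v + ε * (if x = x₀ then sg u u' v else 0)

lemma aux_lin (m k : ℝ) : HasDerivAt (fun ε : ℝ => m + ε * k) k 0 := by
  simpa using ((hasDerivAt_id (0:ℝ)).mul_const k).const_add m

lemma aux_hasDerivAt_main (a b m k : ℝ) (ha : 0 < a) (hm : 0 < m) :
    HasDerivAt (fun ε : ℝ => (a + ε * b) * Real.log ((a + ε * b) / (m + ε * k)))
      (b * Real.log (a / m) + b - a * k / m) 0 := by
  have h1 : HasDerivAt (fun ε : ℝ => a + ε * b) b 0 := aux_lin a b
  have h2 := aux_lin m k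
  have hm0 : m + 0 * k ≠ 0 := by simpa using hm.ne'
  have hne : (a + 0 * b) / (m + 0 * k) ≠ 0 := by
    simp only [zero_mul, add_zero]; exact div_ne_zero ha.ne' hm.ne'
  have h := h1.fun_mul ((h1.fun_div h2 hm0).log hne)
  refine h.congr_deriv ?_
  simp only [zero_mul, add_zero]
  field_simp
  ring

lemma aux_hasDerivAt_main_c (C a b m k : ℝ) (ha : 0 < a) (hm : 0 < m) :
    HasDerivAt (fun ε : ℝ => C * (a + ε * b) * Real.log ((a + ε * b) / (m + ε * k)))
      (C * (b * Real.log (a / m) + b - a * k / m)) 0 := by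
  have h := (aux_hasDerivAt_main a b m k ha hm).const_mul C
  have heq : (fun ε : ℝ => C * ((a + ε * b) * Real.log ((a + ε * b) / (m + ε * k))))
      = fun ε : ℝ => C * (a + ε * b) * Real.log ((a + ε * b) / (m + ε * k)) := by
    funext ε; ring
  rw [heq] at h
  exact h

lemma aux_hasDerivAt_cst (C a m k : ℝ) (ha : a ≠ 0) (hm : 0 < m) :
    HasDerivAt (fun ε : ℝ => C * Real.log (a / (m + ε * k))) (-(C * k / m)) 0 := by
  have h2 := aux_lin m k
  have hm0 : m + 0 * k ≠ 0 := by simpa using hm.ne'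
  have hq := (hasDerivAt_const (0:ℝ) a).fun_div h2 hm0
  have hne : a / (m + 0 * k) ≠ 0 := by
    simp only [zero_mul, add_zero]; exact div_ne_zero ha hm.ne'
  have h := (hq.log hne).const_mul C
  refine h.congr_deriv ?_
  simp only [zero_mul, add_zero]
  field_simp
  ring

/-- Proposition 1: at a minimizer of `c·H(Y|U) + I(U;X)`, the conditional expectation
`E[c·ı_{Y|U}(Y|U) + ı_{U;X}(U;X) | U, X]` does not depend on `U`. -/
theorem wak_stationarity_cond_exp_indep_of_u
    (Q : X → Y → ℝ) (P : X → U → ℝ) (c : ℝ) (hc : 1 ≤ c)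
    (hQpos : ∀ x y, 0 < Q x y) (hQ1 : ∑ x, ∑ y, Q x y = 1)
    (hPnn : ∀ x u, 0 ≤ P x u) (hP1 : ∀ x, ∑ u, P x u = 1)
    (hmin : ∀ P' : X → U → ℝ, (∀ x u, 0 ≤ P' x u) → (∀ x, ∑ u, P' x u = 1) →
      wakObj c Q P ≤ wakObj c Q P') :
    ∀ (x : X) (u u' : U), 0 < P x u → 0 < P x u' →
      ∑ y, (Q x y / margX Q x) *
          (c * Real.log (1 / condYU Q P u y) + Real.log (condXU Q P u x / margX Q x)) =
      ∑ y, (Q x y / margX Q x) *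
          (c * Real.log (1 / condYU Q P u' y) + Real.log (condXU Q P u' x / margX Q x)) := by
  intro x₀ u u' hpu hpu'
  by_cases huu : u = u'
  · subst huu; rfl
  have hY : Nonempty Y := by
    by_contra h
    rw [not_nonempty_iff] at h
    haveI := h
    rw [Finset.univ_eq_empty (α := Y)] at hQ1
    simp at hQ1
  have hq : ∀ x, 0 < margX Q x := fun x =>
    Finset.sum_pos (fun y _ => hQpos x y) Finset.univ_nonempty
  have hA : ∀ v, 0 < P x₀ v → ∀ y, 0 < ∑ x, Q x y * P x v := by
    intro v hv y
    apply Finset.sum_pos' (fun x _ => mul_nonneg (hQpos x y).le (hPnn x v))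
    exact ⟨x₀, Finset.mem_univ _, mul_pos (hQpos x₀ y) hv⟩
  have hm : ∀ v, 0 < P x₀ v → 0 < margU Q P v := by
    intro v hv
    apply Finset.sum_pos' (fun x _ => mul_nonneg (hq x).le (hPnn x v))
    exact ⟨x₀, Finset.mem_univ _, mul_pos (hq x₀) hv⟩
  have hAm : ∀ v, (∑ y, ∑ x, Q x y * P x v) = margU Q P v := by
    intro v
    rw [Finset.sum_comm]
    exact Finset.sum_congr rfl fun x _ => (Finset.sum_mul _ _ _).symm
  have hsgu : sg u u' u = 1 := by simp [sg, huu]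
  have hsgu' : sg u u' u' = -1 := by simp [sg, Ne.symm huu]
  -- perturbation facts
  have hpert0 : pert P x₀ u u' 0 = P := by
    funext x v; simp [pert]
  have hpnn : ∀ ε ∈ Set.Icc (-(P x₀ u)) (P x₀ u'), ∀ x v, 0 ≤ pert P x₀ u u' ε x v := by
    intro ε hε x v
    unfold pert
    by_cases hx : x = x₀
    · rw [if_pos hx]
      by_cases hvu : v = u
      · rw [hx, hvu, hsgu, mul_one]
        have h1 := hε.1
        linarith
      · by_cases hvu' : v = u'
        · rw [hx, hvu', hsgu', mul_neg_one]
          have h2 := hε.2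
          linarith
        · have hz : sg u u' v = 0 := by simp [sg, hvu, hvu']
          rw [hz, mul_zero, add_zero]
          exact hPnn x v
    · rw [if_neg hx, mul_zero, add_zero]
      exact hPnn x v
  have hpsum : ∀ ε : ℝ, ∀ x, ∑ v, pert P x₀ u u' ε x v = 1 := by
    intro ε x
    unfold pert
    rw [Finset.sum_add_distrib, hP1 x]
    have hsg0 : ∑ v, sg u u' v = 0 := by
      unfold sg
      rw [Finset.sum_sub_distrib]
      simp [Finset.sum_ite_eq']
    have : ∑ v, ε * (if x = x₀ then sg u u' v else 0) = 0 := by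
      by_cases hx : x = x₀
      · have h1 : ∀ v : U, ε * (if x = x₀ then sg u u' v else 0) = ε * sg u u' v :=
          fun v => by rw [if_pos hx]
        rw [Finset.sum_congr rfl fun v _ => h1 v, ← Finset.mul_sum, hsg0, mul_zero]
      · have h1 : ∀ v : U, ε * (if x = x₀ then sg u u' v else 0) = 0 :=
          fun v => by rw [if_neg hx, mul_zero]
        rw [Finset.sum_congr rfl fun v _ => h1 v, Finset.sum_const_zero]
    rw [this, add_zero]
  -- rewriting the perturbed objective
  have hAε : ∀ (ε : ℝ) v y, (∑ x, Q x y * pert P x₀ u u' ε x v)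
      = (∑ x, Q x y * P x v) + ε * (Q x₀ y * sg u u' v) := by
    intro ε v y
    unfold pert
    rw [Finset.sum_congr rfl fun x _ => mul_add (Q x y) _ _, Finset.sum_add_distrib]
    congr 1
    have : ∀ x : X, Q x y * (ε * (if x = x₀ then sg u u' v else 0))
        = (if x = x₀ then Q x y * (ε * sg u u' v) else 0) := by
      intro x; split <;> simp
    rw [Finset.sum_congr rfl fun x _ => this x, Finset.sum_ite_eq' Finset.univ x₀ _]
    rw [if_pos (Finset.mem_univ x₀)]
    ring
  have hMε : ∀ (ε : ℝ) v, margU Q (pert P x₀ u u' ε) v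
      = margU Q P v + ε * (margX Q x₀ * sg u u' v) := by
    intro ε v
    unfold margU pert
    rw [Finset.sum_congr rfl fun x _ => mul_add (margX Q x) _ _, Finset.sum_add_distrib]
    congr 1
    have : ∀ x : X, margX Q x * (ε * (if x = x₀ then sg u u' v else 0))
        = (if x = x₀ then margX Q x * (ε * sg u u' v) else 0) := by
      intro x; split <;> simp
    rw [Finset.sum_congr rfl fun x _ => this x, Finset.sum_ite_eq' Finset.univ x₀ _]
    rw [if_pos (Finset.mem_univ x₀)]
    ring
  have hFw : ∀ ε : ℝ, wakObj c Q (pert P x₀ u u' ε) =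
      c * -(∑ v, ∑ y, ((∑ x, Q x y * P x v) + ε * (Q x₀ y * sg u u' v)) *
        Real.log (((∑ x, Q x y * P x v) + ε * (Q x₀ y * sg u u' v)) /
          (margU Q P v + ε * (margX Q x₀ * sg u u' v)))) +
      ∑ v, ∑ x, margX Q x * (P x v + ε * (if x = x₀ then sg u u' v else 0)) *
        Real.log ((P x v + ε * (if x = x₀ then sg u u' v else 0)) /
          (margU Q P v + ε * (margX Q x₀ * sg u u' v))) := by
    intro ε
    unfold wakObj condEntYU mutInfUX condYU
    congr 1
    · congr 2
      apply Finset.sum_congr rfl; intro v _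
      apply Finset.sum_congr rfl; intro y _
      rw [hAε ε v y, hMε ε v]
    · apply Finset.sum_congr rfl; intro v _
      apply Finset.sum_congr rfl; intro x _
      rw [hMε ε v]
      rfl
  -- the derivative
  have hder : HasDerivAt (fun ε : ℝ =>
      c * -(∑ v, ∑ y, ((∑ x, Q x y * P x v) + ε * (Q x₀ y * sg u u' v)) *
        Real.log (((∑ x, Q x y * P x v) + ε * (Q x₀ y * sg u u' v)) /
          (margU Q P v + ε * (margX Q x₀ * sg u u' v)))) +
      ∑ v, ∑ x, margX Q x * (P x v + ε * (if x = x₀ then sg u u' v else 0)) *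
        Real.log ((P x v + ε * (if x = x₀ then sg u u' v else 0)) /
          (margU Q P v + ε * (margX Q x₀ * sg u u' v))))
      (c * -(∑ v, ∑ y, (Q x₀ y * sg u u' v *
          Real.log ((∑ x, Q x y * P x v) / margU Q P v) + Q x₀ y * sg u u' v -
          (∑ x, Q x y * P x v) * (margX Q x₀ * sg u u' v) / margU Q P v)) +
        ∑ v, ∑ x, ((if x = x₀ then margX Q x₀ * (sg u u' v *
            Real.log (P x₀ v / margU Q P v) + sg u u' v) else 0) -
          margX Q x * P x v * (margX Q x₀ * sg u u' v) / margU Q P v)) 0 := by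
    have hEnt : HasDerivAt (fun ε : ℝ =>
        ∑ v, ∑ y, ((∑ x, Q x y * P x v) + ε * (Q x₀ y * sg u u' v)) *
          Real.log (((∑ x, Q x y * P x v) + ε * (Q x₀ y * sg u u' v)) /
            (margU Q P v + ε * (margX Q x₀ * sg u u' v))))
        (∑ v, ∑ y, (Q x₀ y * sg u u' v *
          Real.log ((∑ x, Q x y * P x v) / margU Q P v) + Q x₀ y * sg u u' v -
          (∑ x, Q x y * P x v) * (margX Q x₀ * sg u u' v) / margU Q P v)) 0 := by
      apply HasDerivAt.fun_sum
      intro v _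
      apply HasDerivAt.fun_sum
      intro y _
      by_cases hsg : sg u u' v = 0
      · simp only [hsg, mul_zero, zero_mul, add_zero, zero_div, sub_zero]
        exact hasDerivAt_const _ _
      · have hPv : 0 < P x₀ v := by
          rcases (show v = u ∨ v = u' by
            by_contra h
            push_neg at h
            exact hsg (by simp [sg, h.1, h.2])) with h | h
          · rw [h]; exact hpu
          · rw [h]; exact hpu'
        exact aux_hasDerivAt_main _ _ _ _ (hA v hPv y) (hm v hPv)
    have hMI : HasDerivAt (fun ε : ℝ =>
        ∑ v, ∑ x, margX Q x * (P x v + ε * (if x = x₀ then sg u u' v else 0)) *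
          Real.log ((P x v + ε * (if x = x₀ then sg u u' v else 0)) /
            (margU Q P v + ε * (margX Q x₀ * sg u u' v))))
        (∑ v, ∑ x, ((if x = x₀ then margX Q x₀ * (sg u u' v *
            Real.log (P x₀ v / margU Q P v) + sg u u' v) else 0) -
          margX Q x * P x v * (margX Q x₀ * sg u u' v) / margU Q P v)) 0 := by
      apply HasDerivAt.fun_sum
      intro v _
      apply HasDerivAt.fun_sum
      intro x _
      by_cases hsg : sg u u' v = 0
      · simp only [hsg, mul_zero, zero_mul, ite_self, add_zero, zero_add, zero_div, sub_zero]
        exact hasDerivAt_const _ _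
      · have hPv : 0 < P x₀ v := by
          rcases (show v = u ∨ v = u' by
            by_contra h
            push_neg at h
            exact hsg (by simp [sg, h.1, h.2])) with h | h
          · rw [h]; exact hpu
          · rw [h]; exact hpu'
        by_cases hx : x = x₀
        · subst hx
          rw [show (if x = x then sg u u' v else 0) = sg u u' v from if_pos rfl,
            show (if x = x then margX Q x * (sg u u' v *
              Real.log (P x v / margU Q P v) + sg u u' v) else 0)
              = margX Q x * (sg u u' v * Real.log (P x v / margU Q P v) + sg u u' v)
              from if_pos rfl]
          have h := aux_hasDerivAt_main_c (margX Q x) (P x v) (sg u u' v) (margU Q P v)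
            (margX Q x * sg u u' v) hPv (hm v hPv)
          refine h.congr_deriv ?_
          ring
        · simp only [if_neg hx, mul_zero, add_zero]
          by_cases hP : P x v = 0
          · simp only [hP, mul_zero, zero_mul, zero_div, sub_zero, zero_sub, neg_zero]
            exact hasDerivAt_const _ _
          · have h := aux_hasDerivAt_cst (margX Q x * P x v) (P x v) (margU Q P v)
              (margX Q x₀ * sg u u' v) hP (hm v hPv)
            refine h.congr_deriv ?_
            ring
    exact ((hEnt.neg).const_mul c).add hMI
  -- local minimality
  have hlocal : IsLocalMin (fun ε : ℝ => wakObj c Q (pert P x₀ u u' ε)) 0 := by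
    have hIcc : Set.Icc (-(P x₀ u)) (P x₀ u') ∈ nhds (0:ℝ) :=
      Icc_mem_nhds (by linarith) hpu'
    refine Filter.eventually_of_mem hIcc fun ε hε => ?_
    simp only [hpert0]
    exact hmin _ (hpnn ε hε) (hpsum ε)
  have hder' : HasDerivAt (fun ε : ℝ => wakObj c Q (pert P x₀ u u' ε))
      (c * -(∑ v, ∑ y, (Q x₀ y * sg u u' v *
          Real.log ((∑ x, Q x y * P x v) / margU Q P v) + Q x₀ y * sg u u' v -
          (∑ x, Q x y * P x v) * (margX Q x₀ * sg u u' v) / margU Q P v)) +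
        ∑ v, ∑ x, ((if x = x₀ then margX Q x₀ * (sg u u' v *
            Real.log (P x₀ v / margU Q P v) + sg u u' v) else 0) -
          margX Q x * P x v * (margX Q x₀ * sg u u' v) / margU Q P v)) 0 := by
    have heq : (fun ε : ℝ => wakObj c Q (pert P x₀ u u' ε)) = _ := funext hFw
    rw [heq]
    exact hder
  have hD : c * -(∑ v, ∑ y, (Q x₀ y * sg u u' v *
          Real.log ((∑ x, Q x y * P x v) / margU Q P v) + Q x₀ y * sg u u' v -
          (∑ x, Q x y * P x v) * (margX Q x₀ * sg u u' v) / margU Q P v)) +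
        ∑ v, ∑ x, ((if x = x₀ then margX Q x₀ * (sg u u' v *
            Real.log (P x₀ v / margU Q P v) + sg u u' v) else 0) -
          margX Q x * P x v * (margX Q x₀ * sg u u' v) / margU Q P v) = 0 := by
    rw [← hder'.deriv]
    exact hlocal.deriv_eq_zero
  -- collapse the sums over v
  have hpair : ∀ g : U → ℝ, (∀ v, sg u u' v = 0 → g v = 0) → ∑ v, g v = g u + g u' := by
    intro g hg
    have h1 : ∑ v ∈ ({u, u'} : Finset U), g v = g u + g u' := Finset.sum_pair huu
    rw [← h1]
    refine (Finset.sum_subset (Finset.subset_univ _) ?_).symm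
    intro v _ hv
    simp only [Finset.mem_insert, Finset.mem_singleton, not_or] at hv
    exact hg v (by simp [sg, hv.1, hv.2])
  have hEv : ∀ (s : ℝ) (v : U), 0 < P x₀ v →
      (∑ y, (Q x₀ y * s * Real.log ((∑ x, Q x y * P x v) / margU Q P v) + Q x₀ y * s -
        (∑ x, Q x y * P x v) * (margX Q x₀ * s) / margU Q P v))
      = s * ∑ y, Q x₀ y * Real.log ((∑ x, Q x y * P x v) / margU Q P v) := by
    intro s v hv
    have hm' := (hm v hv).ne'
    have expand : ∀ y, Q x₀ y * s * Real.log ((∑ x, Q x y * P x v) / margU Q P v) + Q x₀ y * s -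
        (∑ x, Q x y * P x v) * (margX Q x₀ * s) / margU Q P v
      = s * (Q x₀ y * Real.log ((∑ x, Q x y * P x v) / margU Q P v)) + s * Q x₀ y -
        (margX Q x₀ * s / margU Q P v) * (∑ x, Q x y * P x v) := fun y => by ring
    rw [Finset.sum_congr rfl fun y _ => expand y]
    rw [Finset.sum_sub_distrib, Finset.sum_add_distrib, ← Finset.mul_sum, ← Finset.mul_sum,
      ← Finset.mul_sum, hAm v]
    rw [div_mul_cancel₀ _ hm']
    rw [show (∑ y, Q x₀ y) = margX Q x₀ from rfl]
    ring
  have hMv : ∀ (s : ℝ) (v : U), 0 < P x₀ v →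
      (∑ x, ((if x = x₀ then margX Q x₀ * (s * Real.log (P x₀ v / margU Q P v) + s) else 0) -
        margX Q x * P x v * (margX Q x₀ * s) / margU Q P v))
      = margX Q x₀ * s * Real.log (P x₀ v / margU Q P v) := by
    intro s v hv
    have hm' := (hm v hv).ne'
    rw [Finset.sum_sub_distrib]
    rw [Finset.sum_ite_eq' Finset.univ x₀
      (fun _ => margX Q x₀ * (s * Real.log (P x₀ v / margU Q P v) + s))]
    have expand : ∀ x : X, margX Q x * P x v * (margX Q x₀ * s) / margU Q P v
        = (margX Q x₀ * s / margU Q P v) * (margX Q x * P x v) := fun x => by ring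
    rw [Finset.sum_congr rfl fun x _ => expand x, ← Finset.mul_sum]
    rw [show (∑ x, margX Q x * P x v) = margU Q P v from rfl]
    rw [div_mul_cancel₀ _ hm']
    rw [if_pos (Finset.mem_univ x₀)]
    ring
  rw [hpair (fun v => ∑ y, (Q x₀ y * sg u u' v *
        Real.log ((∑ x, Q x y * P x v) / margU Q P v) + Q x₀ y * sg u u' v -
        (∑ x, Q x y * P x v) * (margX Q x₀ * sg u u' v) / margU Q P v))
      (fun v hv => Finset.sum_eq_zero fun y _ => by rw [hv]; ring),
    hpair (fun v => ∑ x, ((if x = x₀ then margX Q x₀ * (sg u u' v *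
        Real.log (P x₀ v / margU Q P v) + sg u u' v) else 0) -
        margX Q x * P x v * (margX Q x₀ * sg u u' v) / margU Q P v))
      (fun v hv => Finset.sum_eq_zero fun x _ => by rw [hv]; simp)] at hD
  rw [hEv (sg u u' u) u hpu, hEv (sg u u' u') u' hpu',
    hMv (sg u u' u) u hpu, hMv (sg u u' u') u' hpu', hsgu, hsgu'] at hD
  -- relate the goal to the derivative quantities
  have hside : ∀ v : U, 0 < P x₀ v →
      margX Q x₀ * ∑ y, (Q x₀ y / margX Q x₀) *
        (c * Real.log (1 / condYU Q P v y) + Real.log (condXU Q P v x₀ / margX Q x₀))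
      = margX Q x₀ * Real.log (P x₀ v / margU Q P v) -
        c * ∑ y, Q x₀ y * Real.log ((∑ x, Q x y * P x v) / margU Q P v) := by
    intro v hv
    have e2 : condXU Q P v x₀ / margX Q x₀ = P x₀ v / margU Q P v := by
      unfold condXU
      rw [div_div, mul_comm (margU Q P v) (margX Q x₀), mul_div_mul_left _ _ (hq x₀).ne']
    have hterm : ∀ y, margX Q x₀ * ((Q x₀ y / margX Q x₀) *
        (c * Real.log (1 / condYU Q P v y) + Real.log (condXU Q P v x₀ / margX Q x₀)))
        = Q x₀ y * Real.log (P x₀ v / margU Q P v) -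
          c * (Q x₀ y * Real.log ((∑ x, Q x y * P x v) / margU Q P v)) := by
      intro y
      rw [e2, show condYU Q P v y = (∑ x, Q x y * P x v) / margU Q P v from rfl,
        one_div, Real.log_inv]
      field_simp [(hq x₀).ne']
      ring
    rw [Finset.mul_sum, Finset.sum_congr rfl fun y _ => hterm y, Finset.sum_sub_distrib,
      ← Finset.sum_mul, ← Finset.mul_sum]
    rw [show (∑ y, Q x₀ y) = margX Q x₀ from rfl]
  apply mul_left_cancel₀ (hq x₀).ne'
  rw [hside u hpu, hside u' hpu']
  linear_combination hD
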